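/- For all integers a_1,…,a_n, every index i with 1 ≤ i ≤ n, and all integers a′_i, a″_i with a′_i + a″_i = a_i + 1, one has M_{n+2}(a_1,…,a_{i−1}, a′_i, 1, 1, a″_i, a_{i+1},…,a_n) = −M_n(a_1,…,a_n). (Operation (b) transforms the matrix M_n into its opposite.) -/

import Mathlib

/-- The elementary matrix `[[a, -1], [1, 0]]`. -/
def genMat (a : ℤ) : Matrix (Fin 2) (Fin 2) ℤ := !![a, -1; 1, 0]

/-- `Mprod [a₁, …, aₙ] = [[aₙ,-1],[1,0]] ⋯ [[a₁,-1],[1,0]]`. -/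
def Mprod (l : List ℤ) : Matrix (Fin 2) (Fin 2) ℤ := ((l.map genMat).reverse).prod

lemma key (a a' a'' : ℤ) (h : a' + a'' = a + 1) :
    genMat a'' * genMat 1 * genMat 1 * genMat a' = -genMat a := by
  have : a'' = a + 1 - a' := by linarith
  subst this
  simp [genMat]
  exact ⟨by ring, by ring⟩

/-- Operation (b) transforms the matrix `Mₙ` into its opposite. -/
theorem stmt2 (u v : List ℤ) (a a' a'' : ℤ) (h : a' + a'' = a + 1) :
    Mprod (u ++ a' :: 1 :: 1 :: a'' :: v) = -Mprod (u ++ a :: v) := by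
  simp only [Mprod, List.map_append, List.map_cons, List.reverse_append,
    List.reverse_cons, List.prod_append, List.prod_cons]
  simp only [List.append_assoc, List.prod_append, List.prod_cons, List.prod_nil,
    mul_one, List.singleton_append]
  have key' : ∀ x : Matrix (Fin 2) (Fin 2) ℤ,
      genMat a'' * (genMat 1 * (genMat 1 * (genMat a' * x))) = -(genMat a * x) := by
    intro x
    rw [← mul_assoc, ← mul_assoc, ← mul_assoc, key a a' a'' h, neg_mul]
  simp only [mul_assoc, key', mul_neg]
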